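/- Let M be a finite-dimensional unital C*-algebra and E a faithful conditional expectation on M. Then there exists a real number K ≥ 1 such that the map K·E − id_M is positive. -/

import Mathlib

variable {A : Type*} [CStarAlgebra A] [PartialOrder A] [StarOrderedRing A]

/-- A conditional expectation on a unital C*-algebra `A`: a linear, idempotent, unital,
positive, contractive (norm-one, since `E 1 = 1`) map whose range is a C*-subalgebra
`B = E(A)` (closed under multiplication and star) and which is a `B`-bimodule map. -/
structure IsCondExp (E : A → A) : Prop where
  map_add : ∀ a b : A, E (a + b) = E a + E b
  map_smul : ∀ (c : ℂ) (a : A), E (c • a) = c • E a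
  idem : ∀ a : A, E (E a) = E a
  map_one : E 1 = 1
  pos : ∀ a : A, 0 ≤ a → 0 ≤ E a
  contractive : ∀ a : A, ‖E a‖ ≤ ‖a‖
  range_mul : ∀ a b : A, E (E a * E b) = E a * E b
  range_star : ∀ a : A, E (star (E a)) = star (E a)
  bimod : ∀ a b c : A, E (E b * a * E c) = E b * E a * E c


namespace IsCondExp

variable {E : A → A} (hE : IsCondExp E)
include hE

lemma map_zero' : E 0 = 0 := by
  have := hE.map_smul 0 0
  simpa using this

lemma map_neg' (a : A) : E (-a) = - E a := by
  have := hE.map_smul (-1) a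
  simpa using this

lemma map_sub' (a b : A) : E (a - b) = E a - E b := by
  rw [sub_eq_add_neg, hE.map_add, hE.map_neg', sub_eq_add_neg]

lemma map_real_smul (r : ℝ) (a : A) : E (r • a) = r • E a := by
  rw [← Complex.coe_smul, hE.map_smul, Complex.coe_smul]

lemma monotone' {a b : A} (hab : a ≤ b) : E a ≤ E b := by
  have h := hE.pos (b - a) (by simpa using hab)
  rw [hE.map_sub'] at h
  simpa using h

lemma map_isSelfAdjoint {h : A} (hh : IsSelfAdjoint h) : IsSelfAdjoint (E h) := by
  have h1 : (0:A) ≤ h + ‖h‖ • 1 := by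
    have h2 := hh.neg_algebraMap_norm_le_self
    rw [Algebra.algebraMap_eq_smul_one] at h2
    simpa [sub_neg_eq_add] using sub_nonneg.mpr h2
  have hq : IsSelfAdjoint (E (h + ‖h‖ • 1)) := IsSelfAdjoint.of_nonneg (hE.pos _ h1)
  have hrw : E h = E (h + ‖h‖ • 1) - ‖h‖ • 1 := by
    rw [hE.map_add, hE.map_real_smul, hE.map_one]; abel
  rw [hrw]
  exact hq.sub (IsSelfAdjoint.smul (star_trivial (‖h‖)) (IsSelfAdjoint.one A))

lemma map_star' (z : A) : E (star z) = star (E z) := by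
  have hhsa : IsSelfAdjoint (z + star z) := by
    simp [IsSelfAdjoint, add_comm]
  have hksa : IsSelfAdjoint (Complex.I • (star z - z)) := by
    simp only [IsSelfAdjoint, star_smul, star_sub, star_star, Complex.star_def, Complex.conj_I]
    rw [neg_smul, ← smul_neg, neg_sub]
  have e1 : IsSelfAdjoint (E (z + star z)) := hE.map_isSelfAdjoint hhsa
  have e2 : IsSelfAdjoint (E (Complex.I • (star z - z))) := hE.map_isSelfAdjoint hksa
  rw [hE.map_add] at e1
  rw [hE.map_smul, hE.map_sub'] at e2
  set u := E z
  set v := E (star z)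
  have s1 : star u + star v = u + v := by
    have := e1.star_eq; rwa [star_add] at this
  have s2 : star u - star v = v - u := by
    have h2 := e2.star_eq
    rw [star_smul, star_sub, Complex.star_def, Complex.conj_I, neg_smul, ← smul_neg, neg_sub] at h2
    exact smul_right_injective A Complex.I_ne_zero h2
  have h4 : (2:ℂ) • star u = (2:ℂ) • v := by
    rw [two_smul, two_smul]
    calc star u + star u = (star u + star v) + (star u - star v) := by abel
      _ = (u + v) + (v - u) := by rw [s1, s2]
      _ = v + v := by abel
  exact (smul_right_injective A two_ne_zero h4).symm

lemma mul_left' (a z : A) : E (E a * z) = E a * E z := by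
  have := hE.bimod z a 1
  simpa [hE.map_one] using this

lemma mul_right' (z a : A) : E (z * E a) = E z * E a := by
  have := hE.bimod z 1 a
  simpa [hE.map_one] using this

lemma schwarz (d : A) : star (E d) * E d ≤ E (star d * d) := by
  have hst : star (E d) = E (star d) := (hE.map_star' d).symm
  have h0 := hE.pos _ (star_mul_self_nonneg (d - E d))
  have hexp : star (d - E d) * (d - E d)
      = star d * d - star d * E d - star (E d) * d + star (E d) * E d := by
    simp only [star_sub, sub_mul, mul_sub]; abel
  rw [hexp, hE.map_add, hE.map_sub', hE.map_sub', hE.mul_right' (star d) d, hst,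
    hE.mul_left' (star d) d, hE.range_mul (star d) d] at h0
  have h0' : (0:A) ≤ E (star d * d) - E (star d) * E d := by
    convert h0 using 1; abel
  rw [hst]
  exact sub_nonneg.mp h0'

end IsCondExp

open scoped InnerProductSpace in
lemma exists_faithful_functional (M : Type*) [CStarAlgebra M] [PartialOrder M]
    [StarOrderedRing M] [FiniteDimensional ℂ M] :
    ∃ ℓ : M →ₗ[ℝ] ℝ, (∀ a : M, 0 ≤ a → 0 ≤ ℓ a) ∧ (∀ a : M, 0 ≤ a → ℓ a = 0 → a = 0) := by
  classical
  haveI : FiniteDimensional ℝ M := Module.Finite.trans (R := ℝ) ℂ M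
  set Euc := EuclideanSpace ℝ (Fin (Module.finrank ℝ M)) with hEuc
  let φ : M ≃L[ℝ] Euc := toEuclidean
  have hφ0 : φ 0 = 0 := map_zero φ
  let K : ProperCone ℝ Euc :=
    { carrier := φ '' {a : M | 0 ≤ a}
      add_mem' := by
        rintro x y ⟨a, ha, rfl⟩ ⟨b, hb, rfl⟩
        exact ⟨a + b, add_nonneg ha hb, map_add φ a b⟩
      zero_mem' := ⟨0, le_refl 0, hφ0⟩
      smul_mem' := by
        rintro ⟨c, hc⟩ x ⟨a, ha, rfl⟩
        exact ⟨c • a, smul_nonneg hc ha, by simp⟩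
      isClosed' := by
        exact (φ.toHomeomorph.isClosedMap) _ (CStarAlgebra.isClosed_nonneg (A := M)) }
  have hmemK : ∀ x, x ∈ K ↔ ∃ a : M, 0 ≤ a ∧ φ a = x := by
    intro x
    constructor
    · rintro ⟨a, ha, rfl⟩; exact ⟨a, ha, rfl⟩
    · rintro ⟨a, ha, rfl⟩; exact ⟨a, ha, rfl⟩
  have hspan : Submodule.span ℝ ((ProperCone.innerDual (K : Set Euc) : PointedCone ℝ Euc) : Set Euc) = ⊤ := by
    by_contra hne
    have hob : (Submodule.span ℝ ((ProperCone.innerDual (K : Set Euc) : PointedCone ℝ Euc) : Set Euc))ᗮ ≠ ⊥ := by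
      intro hb
      exact hne (Submodule.orthogonal_eq_bot_iff.mp hb)
    obtain ⟨u, hu_mem, hu0⟩ := Submodule.exists_mem_ne_zero_of_ne_bot hob
    have hzero : ∀ x ∈ ProperCone.innerDual (K : Set Euc), ⟪x, u⟫_ℝ = 0 := fun x hx =>
      (Submodule.mem_orthogonal _ u).mp hu_mem x (Submodule.subset_span hx)
    have hu : u ∈ ProperCone.innerDual (ProperCone.innerDual (K : Set Euc) : Set Euc) := ProperCone.mem_innerDual.mpr fun x hx => le_of_eq (hzero x hx).symm
    have hnu : -u ∈ ProperCone.innerDual (ProperCone.innerDual (K : Set Euc) : Set Euc) := ProperCone.mem_innerDual.mpr fun x hx => by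
      rw [inner_neg_right, hzero x hx, neg_zero]
    rw [ProperCone.innerDual_innerDual] at hu hnu
    obtain ⟨a, ha, hau⟩ := (hmemK u).mp hu
    obtain ⟨b, hb, hbu⟩ := (hmemK (-u)).mp hnu
    have hab : a = -b := by
      apply φ.injective
      rw [map_neg, hau, hbu, neg_neg]
    have ha0 : a = 0 := le_antisymm (by rw [hab]; simpa using hb) ha
    exact hu0 (by rw [← hau, ha0, hφ0])
  -- extract a finite spanning subset of the dual cone
  let β := Module.finBasis ℝ Euc
  have hmem : ∀ i, β i ∈ Submodule.span ℝ ((ProperCone.innerDual (K : Set Euc) : PointedCone ℝ Euc) : Set Euc) := by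
    intro i; rw [hspan]; trivial
  choose t ht hmemt using fun i => Submodule.mem_span_finite_of_mem_span (hmem i)
  let T : Finset Euc := Finset.univ.biUnion t
  have hTD : ∀ v ∈ T, v ∈ ProperCone.innerDual (K : Set Euc) := by
    intro v hv
    obtain ⟨i, _, hvi⟩ := Finset.mem_biUnion.mp hv
    exact ht i hvi
  have hTspan : Submodule.span ℝ (T : Set Euc) = ⊤ := by
    rw [eq_top_iff, ← β.span_eq, Submodule.span_le]
    rintro x ⟨i, rfl⟩
    exact Submodule.span_mono (by
      intro z hz
      exact Finset.mem_coe.mpr (Finset.mem_biUnion.mpr ⟨i, Finset.mem_univ i, hz⟩)) (hmemt i)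
  refine ⟨{ toFun := fun x => ∑ v ∈ T, ⟪v, φ x⟫_ℝ
            map_add' := by intro x y; simp [inner_add_right, Finset.sum_add_distrib]
            map_smul' := by intro c x; simp [inner_smul_right, Finset.mul_sum] }, ?_, ?_⟩
  · intro a ha
    refine Finset.sum_nonneg fun v hv => ?_
    rw [real_inner_comm]
    exact ProperCone.mem_innerDual.mp (hTD v hv) ((hmemK (φ a)).mpr ⟨a, ha, rfl⟩)
  · intro a ha h0
    have hterm : ∀ v ∈ T, ⟪v, φ a⟫_ℝ = 0 := by
      have hnn : ∀ v ∈ T, 0 ≤ ⟪v, φ a⟫_ℝ := fun v hv => by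
        rw [real_inner_comm]
        exact ProperCone.mem_innerDual.mp (hTD v hv) ((hmemK (φ a)).mpr ⟨a, ha, rfl⟩)
      exact (Finset.sum_eq_zero_iff_of_nonneg hnn).mp h0
    have hall : ∀ u ∈ Submodule.span ℝ (T : Set Euc), ⟪u, φ a⟫_ℝ = 0 := by
      intro u hu
      induction hu using Submodule.span_induction with
      | mem x hx => exact hterm x hx
      | zero => exact inner_zero_left _
      | add x y _ _ hx hy => rw [inner_add_left, hx, hy, add_zero]
      | smul c x _ hx => rw [real_inner_smul_left, hx, mul_zero]
    have : ⟪φ a, φ a⟫_ℝ = 0 := hall (φ a) (by rw [hTspan]; trivial)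
    have : φ a = 0 := inner_self_eq_zero.mp this
    apply φ.injective
    rw [this, hφ0]

section NNsyn

private def NN (M : Type*) : Type _ := M

private def nto {M : Type*} : NN M → M := fun x => x
private def nof {M : Type*} : M → NN M := fun x => x

private instance {M : Type*} [AddCommGroup M] : AddCommGroup (NN M) :=
  inferInstanceAs (AddCommGroup M)

private instance {M : Type*} [AddCommGroup M] [Module ℂ M] : Module ℂ (NN M) :=
  inferInstanceAs (Module ℂ M)

private def nEquiv (M : Type*) [AddCommGroup M] [Module ℂ M] : NN M ≃ₗ[ℂ] M :=
  { toFun := nto, invFun := nof, map_add' := fun _ _ => rfl, map_smul' := fun _ _ => rfl,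
    left_inv := fun _ => rfl, right_inv := fun _ => rfl }

private instance {M : Type*} [AddCommGroup M] [Module ℂ M] [FiniteDimensional ℂ M] :
    FiniteDimensional ℂ (NN M) := Module.Finite.equiv (nEquiv M).symm

end NNsyn

open scoped InnerProductSpace in
lemma exists_reproducing {M : Type*} [CStarAlgebra M] [PartialOrder M] [StarOrderedRing M]
    [FiniteDimensional ℂ M] (E : M → M) (hE : IsCondExp E)
    (hfaith : ∀ a : M, E (star a * a) = 0 → a = 0) :
    ∃ (n : ℕ) (y : Fin n → M), ∀ x : M, ∑ i, y i * E (star (y i) * x) = x := by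
  classical
  obtain ⟨ℓ, hℓpos, hℓfaith⟩ := exists_faithful_functional M
  -- the symmetrized real functional
  set f : M → ℝ := fun z => (ℓ z + ℓ (star z)) / 2 with hf
  have hf_add : ∀ x y : M, f (x + y) = f x + f y := by
    intro x y; simp only [hf, star_add, map_add]; ring
  have hf_csmulI : ∀ (x : M), f (Complex.I • x) = (ℓ (Complex.I • x) - ℓ (Complex.I • star x)) / 2 := by
    intro x
    simp only [hf, star_smul, Complex.star_def, Complex.conj_I]
    rw [neg_smul, map_neg]
    ring
  have hf_rsmul : ∀ (r : ℝ) (x : M), f (r • x) = r * f x := by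
    intro r x
    have hst : star (r • x) = r • star x := by
      rw [← Complex.coe_smul, star_smul, Complex.star_def, Complex.conj_ofReal, Complex.coe_smul]
    simp only [hf, hst, map_smul, smul_eq_mul]; ring
  have hf_sa : ∀ x : M, 0 ≤ x → f x = ℓ x := by
    intro x hx
    have : star x = x := (IsSelfAdjoint.of_nonneg hx).star_eq
    simp [hf, this]
  have hf_star : ∀ x : M, f (star x) = f x := by
    intro x; simp [hf, star_star]; ring
  have hf_neg : ∀ x : M, f (-x) = - f x := by
    intro x; simp [hf, star_neg]; ring
  -- the complex faithful positive functional
  set ρ : M → ℂ := fun z => (f z : ℂ) - Complex.I * (f (Complex.I • z) : ℂ) with hρ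
  have hρ_sa : ∀ x : M, 0 ≤ x → ρ x = (f x : ℂ) := by
    intro x hx
    have hsx : star x = x := (IsSelfAdjoint.of_nonneg hx).star_eq
    have : f (Complex.I • x) = 0 := by
      rw [hf_csmulI, hsx, sub_self, zero_div]
    rw [hρ]; simp [this]
  have hρ_add : ∀ x y : M, ρ (x + y) = ρ x + ρ y := by
    intro x y
    simp only [hρ, smul_add, hf_add]; push_cast; ring
  have hρ_rsmul : ∀ (r : ℝ) (x : M), ρ (r • x) = (r : ℂ) * ρ x := by
    intro r x
    have hcomm : Complex.I • r • x = r • Complex.I • x := smul_comm _ _ _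
    simp only [hρ, hf_rsmul, hcomm]; push_cast; ring
  have hρ_Ismul : ∀ x : M, ρ (Complex.I • x) = Complex.I * ρ x := by
    intro x
    have hII : Complex.I • Complex.I • x = -x := by
      rw [smul_smul, Complex.I_mul_I, neg_one_smul]
    simp only [hρ, hII, hf_neg]
    push_cast
    ring_nf
    rw [Complex.I_sq]
    ring
  have hρ_csmul : ∀ (c : ℂ) (x : M), ρ (c • x) = c * ρ x := by
    intro c x
    have hc : c • x = c.re • x + c.im • Complex.I • x := by
      rw [← Complex.coe_smul, ← Complex.coe_smul, smul_smul]
      rw [← add_smul]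
      congr 1
      exact (Complex.re_add_im c).symm
    rw [hc, hρ_add, hρ_rsmul, hρ_rsmul, hρ_Ismul]
    conv_rhs => rw [← Complex.re_add_im c]
    ring
  have hρ_star : ∀ x : M, ρ (star x) = (starRingEnd ℂ) (ρ x) := by
    intro x
    have h1 : Complex.I • star x = star (-(Complex.I • x)) := by
      rw [star_neg, star_smul, Complex.star_def, Complex.conj_I, neg_smul, neg_neg]
    have h2 : f (Complex.I • star x) = - f (Complex.I • x) := by
      rw [h1, hf_star, hf_neg]
    simp only [hρ, hf_star, h2]
    rw [Complex.ext_iff]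
    constructor <;> simp
  have hρ_pos : ∀ x : M, 0 ≤ x → 0 ≤ f x ∧ ρ x = (f x : ℂ) := by
    intro x hx
    refine ⟨?_, hρ_sa x hx⟩
    rw [hf_sa x hx]; exact hℓpos x hx
  have hρ_faithful : ∀ x : M, 0 ≤ x → ρ x = 0 → x = 0 := by
    intro x hx h0
    rw [hρ_sa x hx] at h0
    have hfx0 : f x = 0 := by exact_mod_cast h0
    refine hℓfaith x hx ?_
    rw [← hf_sa x hx]
    exact hfx0
  -- the inner product space structure
  have hEnn : ∀ x : M, 0 ≤ E (star x * x) := fun x => hE.pos _ (star_mul_self_nonneg x)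
  let core : InnerProductSpace.Core ℂ (NN M) :=
    { inner := fun x y => ρ (E (star (nto x) * nto y))
      conj_inner_symm := by
        intro x y
        show (starRingEnd ℂ) (ρ (E (star (nto y) * nto x))) = ρ (E (star (nto x) * nto y))
        rw [← hρ_star, ← hE.map_star', star_mul, star_star]
      re_inner_nonneg := by
        intro x
        show 0 ≤ RCLike.re (ρ (E (star (nto x) * nto x)))
        obtain ⟨h1, h2⟩ := hρ_pos _ (hEnn (nto x))
        rw [h2]; simpa using h1
      add_left := by
        intro x y z
        show ρ (E (star (nto (x + y)) * nto z))
            = ρ (E (star (nto x) * nto z)) + ρ (E (star (nto y) * nto z))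
        have : star (nto (x + y)) * nto z = star (nto x) * nto z + star (nto y) * nto z := by
          show star (nto x + nto y) * nto z = _
          rw [star_add, add_mul]
        rw [this, hE.map_add, hρ_add]
      smul_left := by
        intro x y c
        show ρ (E (star (nto (c • x)) * nto y)) = (starRingEnd ℂ) c * ρ (E (star (nto x) * nto y))
        have : star (nto (c • x)) * nto y = (starRingEnd ℂ c) • (star (nto x) * nto y) := by
          show star (c • nto x) * nto y = _
          rw [star_smul, smul_mul_assoc]; rfl
        rw [this, hE.map_smul, hρ_csmul]
      definite := by
        intro x h0
        have h0' : ρ (E (star (nto x) * nto x)) = 0 := h0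
        have h1 : E (star (nto x) * nto x) = 0 := by
          obtain ⟨hp, hsa⟩ := hρ_pos _ (hEnn (nto x))
          have hfx : f (E (star (nto x) * nto x)) = 0 := by
            rw [hsa] at h0'
            exact_mod_cast h0' 
          apply hℓfaith _ (hEnn (nto x))
          rw [← hf_sa _ (hEnn (nto x))]
          exact hfx
        have : nto x = 0 := hfaith _ h1
        exact this }
  letI : NormedAddCommGroup (NN M) := core.toNormedAddCommGroup
  letI : InnerProductSpace ℂ (NN M) := InnerProductSpace.ofCore core.toCore
  have hinner : ∀ x y : NN M, ⟪x, y⟫_ℂ = ρ (E (star (nto x) * nto y)) := fun _ _ => rfl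
  set n := Module.finrank ℂ (NN M) with hn
  let e : OrthonormalBasis (Fin n) ℂ (NN M) := stdOrthonormalBasis ℂ (NN M)
  -- the frame operator
  set Sf : M → M := fun x => ∑ i, nto (e i) * E (star (nto (e i)) * x) with hSf
  have hSf_add : ∀ x y : M, Sf (x + y) = Sf x + Sf y := by
    intro x y
    simp only [hSf, mul_add, hE.map_add, ← Finset.sum_add_distrib]
  have hSf_smul : ∀ (c : ℂ) (x : M), Sf (c • x) = c • Sf x := by
    intro c x
    simp only [hSf, mul_smul_comm, hE.map_smul, Finset.smul_sum]
  let S : NN M →ₗ[ℂ] NN M :=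
    { toFun := fun x => nof (Sf (nto x))
      map_add' := fun x y => hSf_add (nto x) (nto y)
      map_smul' := fun c x => hSf_smul c (nto x) }
  have hSapp : ∀ x : NN M, nto (S x) = Sf (nto x) := fun _ => rfl
  -- B-valued symmetry
  have hBsym : ∀ x y : M, E (star (Sf x) * y) = E (star x * Sf y) := by
    intro x y
    have hstar : star (Sf x) = ∑ i, star (E (star (nto (e i)) * x)) * star (nto (e i)) := by
      rw [hSf]
      rw [star_sum]
      exact Finset.sum_congr rfl fun i _ => by rw [star_mul]
    rw [hstar, Finset.sum_mul]
    have hL : ∀ i : Fin n, star (E (star (nto (e i)) * x)) * star (nto (e i)) * y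
        = E (star x * nto (e i)) * (star (nto (e i)) * y) := by
      intro i
      rw [← hE.map_star', star_mul, star_star, mul_assoc]
    have hmapsum : E (∑ i, star (E (star (nto (e i)) * x)) * star (nto (e i)) * y)
        = ∑ i, E (star (E (star (nto (e i)) * x)) * star (nto (e i)) * y) := by
      induction (Finset.univ : Finset (Fin n)) using Finset.cons_induction with
      | empty => simpa using hE.map_zero'
      | cons a s ha ih => rw [Finset.sum_cons, Finset.sum_cons, hE.map_add, ih]
    rw [hmapsum]
    have hR : star x * Sf y = ∑ i, star x * nto (e i) * E (star (nto (e i)) * y) := by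
      rw [hSf, Finset.mul_sum]
      exact Finset.sum_congr rfl fun i _ => by rw [← mul_assoc]
    rw [hR]
    have hmapsum2 : E (∑ i, star x * nto (e i) * E (star (nto (e i)) * y))
        = ∑ i, E (star x * nto (e i) * E (star (nto (e i)) * y)) := by
      induction (Finset.univ : Finset (Fin n)) using Finset.cons_induction with
      | empty => simpa using hE.map_zero'
      | cons a s ha ih => rw [Finset.sum_cons, Finset.sum_cons, hE.map_add, ih]
    rw [hmapsum2]
    refine Finset.sum_congr rfl fun i _ => ?_
    rw [hL i, hE.mul_left' (star x * nto (e i)) (star (nto (e i)) * y),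
      hE.mul_right' (star x * nto (e i)) (star (nto (e i)) * y)]
  have hEsum : ∀ (s : Finset (Fin n)) (g : Fin n → M), E (∑ i ∈ s, g i) = ∑ i ∈ s, E (g i) := by
    intro s g
    induction s using Finset.cons_induction with
    | empty => simpa using hE.map_zero'
    | cons a s ha ih => rw [Finset.sum_cons, Finset.sum_cons, hE.map_add, ih]
  have hsym : S.IsSymmetric := by
    intro x y
    rw [hinner, hinner, hSapp, hSapp, hBsym (nto x) (nto y)]
  -- expansion in the orthonormal basis
  have hexpand : ∀ z : NN M, nto z = ∑ k, (e.repr z k) • nto (e k) := by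
    intro z
    have h1 : z = ∑ k, (e.repr z k) • (e k) := (e.sum_repr z).symm
    have h2 : (nEquiv M) z = ∑ k, (e.repr z k) • (nEquiv M) (e k) := by
      conv_lhs => rw [h1]
      simp only [map_sum, map_smul]
    exact h2
  -- E (star x * Sf x) as a sum of positives
  have hg_zero : ∀ x : M, E (star x * Sf x)
      = ∑ i, star (E (star (nto (e i)) * x)) * E (star (nto (e i)) * x) := by
    intro x
    have hR : star x * Sf x = ∑ i, star x * nto (e i) * E (star (nto (e i)) * x) := by
      rw [hSf, Finset.mul_sum]
      exact Finset.sum_congr rfl fun i _ => by rw [← mul_assoc]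
    rw [hR, hEsum Finset.univ _]
    refine Finset.sum_congr rfl fun i _ => ?_
    rw [hE.mul_right' (star x * nto (e i)) (star (nto (e i)) * x)]
    congr 1
    rw [← hE.map_star' (star (nto (e i)) * x), star_mul, star_star]
  -- injectivity of S
  have hSinj : ∀ x : NN M, S x = 0 → x = 0 := by
    intro x hx
    have hx' : Sf (nto x) = 0 := by
      have h := congrArg nto hx
      rw [hSapp] at h
      exact h
    have h0 : (0:M) = ∑ i, star (E (star (nto (e i)) * nto x)) * E (star (nto (e i)) * nto x) := by
      calc (0:M) = E (star (nto x) * Sf (nto x)) := by rw [hx', mul_zero, hE.map_zero']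
        _ = _ := hg_zero (nto x)
    have hterm : ∀ i : Fin n, E (star (nto (e i)) * nto x) = 0 := by
      intro i
      have hnn : ∀ i ∈ (Finset.univ : Finset (Fin n)),
          (0:M) ≤ star (E (star (nto (e i)) * nto x)) * E (star (nto (e i)) * nto x) :=
        fun i _ => star_mul_self_nonneg _
      have h1 := (Finset.sum_eq_zero_iff_of_nonneg hnn).mp h0.symm i (Finset.mem_univ i)
      exact (CStarRing.star_mul_self_eq_zero_iff _).mp h1
    have hstarx : star (nto x) = ∑ i, star ((e.repr x) i) • star (nto (e i)) := by
      rw [hexpand x, star_sum]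
      exact Finset.sum_congr rfl fun i _ => by rw [star_smul]
    have hxx : E (star (nto x) * nto x) = 0 := by
      have hexp : star (nto x) * nto x
          = ∑ i, star ((e.repr x) i) • (star (nto (e i)) * nto x) := by
        rw [hstarx, Finset.sum_mul]
        exact Finset.sum_congr rfl fun i _ => smul_mul_assoc _ _ _
      rw [hexp, hEsum Finset.univ _]
      refine Finset.sum_eq_zero fun i _ => ?_
      rw [hE.map_smul, hterm i, smul_zero]
    exact hfaith (nto x) hxx
  -- the eigenbasis
  have hfinrank : Module.finrank ℂ (NN M) = n := rfl
  set b := hsym.eigenvectorBasis hfinrank with hb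
  set μ := hsym.eigenvalues hfinrank with hμ
  have happly : ∀ i, S (b i) = (μ i : ℂ) • b i := fun i => hsym.apply_eigenvectorBasis hfinrank i
  have hSb : ∀ i, Sf (nto (b i)) = (μ i : ℂ) • nto (b i) := by
    intro i
    have h := congrArg nto (happly i)
    rw [hSapp] at h
    exact h
  have hμpos : ∀ i, 0 < μ i := by
    intro i
    have hnorm : ‖b i‖ = 1 := b.orthonormal.1 i
    have hne : b i ≠ 0 := by
      intro h
      rw [h, norm_zero] at hnorm
      norm_num at hnorm
    have hne0 : μ i ≠ 0 := by
      intro h0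
      apply hne
      apply hSinj
      rw [happly i, h0]
      simp
    have h1 : ⟪b i, S (b i)⟫_ℂ = (μ i : ℂ) := by
      rw [happly i, inner_smul_right, inner_self_eq_norm_sq_to_K, hnorm]
      norm_num
    have h2 : 0 ≤ (⟪b i, S (b i)⟫_ℂ).re := by
      rw [hinner, hSapp]
      have hpos : 0 ≤ E (star (nto (b i)) * Sf (nto (b i))) := by
        rw [hg_zero (nto (b i))]
        exact Finset.sum_nonneg fun j _ => star_mul_self_nonneg _
      obtain ⟨hp, hsa⟩ := hρ_pos _ hpos
      rw [hsa]
      simpa using hp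
    rw [h1] at h2
    have h3 : 0 ≤ μ i := by simpa using h2
    exact lt_of_le_of_ne h3 (Ne.symm hne0)
  -- basis invariance of the frame operator
  have hpar : ∀ k l : Fin n, (∑ i, (e.repr (b i) k) * star (e.repr (b i) l))
      = if k = l then (1:ℂ) else 0 := by
    intro k l
    have h2 : ∀ i : Fin n, (e.repr (b i) k) * star (e.repr (b i) l)
        = ⟪e k, b i⟫_ℂ * ⟪b i, e l⟫_ℂ := by
      intro i
      rw [e.repr_apply_apply (b i) k, e.repr_apply_apply (b i) l, Complex.star_def,
        inner_conj_symm]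
    rw [Finset.sum_congr rfl fun i _ => h2 i, b.sum_inner_mul_inner (e k) (e l)]
    exact orthonormal_iff_ite.mp e.orthonormal k l
  have hinv : ∀ x : M, ∑ i, nto (b i) * E (star (nto (b i)) * x) = Sf x := by
    intro x
    have hterm : ∀ i, nto (b i) * E (star (nto (b i)) * x)
        = ∑ k, ∑ l, ((e.repr (b i) k) * star (e.repr (b i) l))
            • (nto (e k) * E (star (nto (e l)) * x)) := by
      intro i
      have h1 : star (nto (b i)) * x
          = ∑ l, star ((e.repr (b i)) l) • (star (nto (e l)) * x) := by
        have hstar : star (nto (b i)) = ∑ l, star ((e.repr (b i)) l) • star (nto (e l)) := by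
          rw [hexpand (b i), star_sum]
          exact Finset.sum_congr rfl fun l _ => by rw [star_smul]
        rw [hstar, Finset.sum_mul]
        exact Finset.sum_congr rfl fun l _ => smul_mul_assoc _ _ _
      have h2 : E (star (nto (b i)) * x)
          = ∑ l, star ((e.repr (b i)) l) • E (star (nto (e l)) * x) := by
        rw [h1, hEsum Finset.univ _]
        exact Finset.sum_congr rfl fun l _ => hE.map_smul _ _
      calc nto (b i) * E (star (nto (b i)) * x)
          = (∑ k, (e.repr (b i) k) • nto (e k))
            * (∑ l, star ((e.repr (b i)) l) • E (star (nto (e l)) * x)) := by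
            rw [← hexpand (b i), ← h2]
        _ = ∑ k, ∑ l, ((e.repr (b i) k) * star (e.repr (b i) l))
            • (nto (e k) * E (star (nto (e l)) * x)) := by
            rw [Finset.sum_mul]
            refine Finset.sum_congr rfl fun k _ => ?_
            rw [Finset.mul_sum]
            refine Finset.sum_congr rfl fun l _ => ?_
            rw [smul_mul_smul_comm]
    calc (∑ i, nto (b i) * E (star (nto (b i)) * x))
        = ∑ i, ∑ k, ∑ l, ((e.repr (b i) k) * star (e.repr (b i) l))
            • (nto (e k) * E (star (nto (e l)) * x)) :=
          Finset.sum_congr rfl fun i _ => hterm i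
      _ = ∑ k, ∑ l, ∑ i, ((e.repr (b i) k) * star (e.repr (b i) l))
            • (nto (e k) * E (star (nto (e l)) * x)) := by
          rw [Finset.sum_comm]
          exact Finset.sum_congr rfl fun k _ => Finset.sum_comm
      _ = ∑ k, ∑ l, (∑ i, (e.repr (b i) k) * star (e.repr (b i) l))
            • (nto (e k) * E (star (nto (e l)) * x)) := by
          refine Finset.sum_congr rfl fun k _ => Finset.sum_congr rfl fun l _ => ?_
          rw [Finset.sum_smul]
      _ = ∑ k, ∑ l, (if k = l then (1:ℂ) else 0)
            • (nto (e k) * E (star (nto (e l)) * x)) := by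
          refine Finset.sum_congr rfl fun k _ => Finset.sum_congr rfl fun l _ => ?_
          rw [hpar k l]
      _ = ∑ k, nto (e k) * E (star (nto (e k)) * x) := by
          refine Finset.sum_congr rfl fun k _ => ?_
          rw [Finset.sum_eq_single k]
          · rw [if_pos rfl, one_smul]
          · intro l _ hlk
            rw [if_neg (Ne.symm hlk), zero_smul]
          · intro h
            exact absurd (Finset.mem_univ k) h
      _ = Sf x := rfl
  -- eigenvectors with distinct eigenvalues are B-orthogonal
  have horth : ∀ i j, μ i ≠ μ j → E (star (nto (b i)) * nto (b j)) = 0 := by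
    intro i j hne
    have h1 := hBsym (nto (b i)) (nto (b j))
    rw [hSb i, hSb j] at h1
    have hL : star ((μ i : ℂ) • nto (b i)) * nto (b j)
        = (μ i : ℂ) • (star (nto (b i)) * nto (b j)) := by
      rw [star_smul, Complex.star_def, Complex.conj_ofReal, smul_mul_assoc]
    have hR : star (nto (b i)) * ((μ j : ℂ) • nto (b j))
        = (μ j : ℂ) • (star (nto (b i)) * nto (b j)) := by
      rw [mul_smul_comm]
    rw [hL, hR, hE.map_smul, hE.map_smul] at h1
    have h2 : ((μ i : ℂ) - (μ j : ℂ)) • E (star (nto (b i)) * nto (b j)) = 0 := by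
      rw [sub_smul, h1, sub_self]
    rcases smul_eq_zero.mp h2 with h3 | h3
    · exfalso
      apply hne
      have : (μ i : ℂ) = (μ j : ℂ) := by
        have := sub_eq_zero.mp h3
        exact_mod_cast this
      exact_mod_cast this
    · exact h3
  -- the reproducing identity with weights μ⁻¹
  have hrep : ∀ x : M, ∑ i, (μ i)⁻¹ • (nto (b i) * E (star (nto (b i)) * x)) = x := by
    have hT : ∀ j, ∑ i, (μ i)⁻¹ • (nto (b i) * E (star (nto (b i)) * nto (b j))) = nto (b j) := by
      intro j
      have hstep : ∀ i, (μ i)⁻¹ • (nto (b i) * E (star (nto (b i)) * nto (b j)))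
          = (μ j)⁻¹ • (nto (b i) * E (star (nto (b i)) * nto (b j))) := by
        intro i
        by_cases h : μ i = μ j
        · rw [h]
        · rw [horth i j h, mul_zero, smul_zero, smul_zero]
      calc (∑ i, (μ i)⁻¹ • (nto (b i) * E (star (nto (b i)) * nto (b j))))
          = ∑ i, (μ j)⁻¹ • (nto (b i) * E (star (nto (b i)) * nto (b j))) :=
            Finset.sum_congr rfl fun i _ => hstep i
        _ = (μ j)⁻¹ • ∑ i, nto (b i) * E (star (nto (b i)) * nto (b j)) := by
            rw [Finset.smul_sum]
        _ = (μ j)⁻¹ • Sf (nto (b j)) := by rw [hinv]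
        _ = (μ j)⁻¹ • ((μ j : ℂ) • nto (b j)) := by rw [hSb j]
        _ = nto (b j) := by
            rw [← Complex.coe_smul, smul_smul, ← Complex.ofReal_mul,
              inv_mul_cancel₀ (ne_of_gt (hμpos j)), Complex.ofReal_one, one_smul]
    -- both sides are ℂ-linear in x
    intro x
    let T : M →ₗ[ℂ] M :=
      { toFun := fun z => ∑ i, (μ i)⁻¹ • (nto (b i) * E (star (nto (b i)) * z))
        map_add' := by
          intro z w
          simp only [mul_add, hE.map_add, smul_add, Finset.sum_add_distrib]
        map_smul' := by
          intro c z
          simp only [mul_smul_comm, hE.map_smul, RingHom.id_apply, Finset.smul_sum]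
          exact Finset.sum_congr rfl fun i _ => smul_comm _ _ _ }
    have hTid : T = LinearMap.id := by
      apply (b.toBasis.map (nEquiv M)).ext
      intro j
      have hbj : (b.toBasis.map (nEquiv M)) j = nto (b j) := by
        rw [Module.Basis.map_apply, OrthonormalBasis.coe_toBasis]
        rfl
      rw [hbj]
      show (∑ i, (μ i)⁻¹ • (nto (b i) * E (star (nto (b i)) * nto (b j)))) = nto (b j)
      exact hT j
    have := congrArg (fun g => g x) (congrArg (fun (T : M →ₗ[ℂ] M) => (T : M → M)) hTid)
    exact this
  -- assemble the reproducing family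
  refine ⟨n, fun i => (Real.sqrt (μ i))⁻¹ • nto (b i), ?_⟩
  intro x
  have hterm : ∀ i : Fin n, ((Real.sqrt (μ i))⁻¹ • nto (b i))
      * E (star ((Real.sqrt (μ i))⁻¹ • nto (b i)) * x)
      = (μ i)⁻¹ • (nto (b i) * E (star (nto (b i)) * x)) := by
    intro i
    have hstar : star ((Real.sqrt (μ i))⁻¹ • nto (b i))
        = (Real.sqrt (μ i))⁻¹ • star (nto (b i)) := by
      rw [← Complex.coe_smul, star_smul, Complex.star_def, Complex.conj_ofReal, Complex.coe_smul]
    rw [hstar, smul_mul_assoc, smul_mul_assoc, hE.map_real_smul, mul_smul_comm, smul_smul]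
    congr 1
    rw [← Real.sqrt_inv]
    rw [Real.mul_self_sqrt (inv_nonneg.mpr (le_of_lt (hμpos i)))]
  rw [Finset.sum_congr rfl fun i _ => hterm i]
  exact hrep x

section SumSq

variable {A : Type*} [CStarAlgebra A] [PartialOrder A] [StarOrderedRing A]

lemma rsmul_le {x y : A} (h : x ≤ y) {r : ℝ} (hr : 0 ≤ r) : r • x ≤ r • y := by
  rw [← sub_nonneg, ← smul_sub]
  exact smul_nonneg hr (sub_nonneg.mpr h)

lemma sq_add_le (x y : A) : star (x + y) * (x + y)
    ≤ (2:ℝ) • (star x * x) + (2:ℝ) • (star y * y) := by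
  have h1 := star_mul_self_nonneg (x - y)
  rw [← sub_nonneg]
  have h2 : (2:ℝ) • (star x * x) + (2:ℝ) • (star y * y) - star (x + y) * (x + y)
      = star (x - y) * (x - y) := by
    have h3 : ∀ z : A, (2:ℝ) • z = z + z := fun z => two_smul ℝ z
    rw [h3, h3]
    simp only [star_add, star_sub, add_mul, mul_add, sub_mul, mul_sub]
    abel
  rw [h2]
  exact h1

lemma sum_sq_le {ι : Type*} (s : Finset ι) (v : ι → A) :
    star (∑ i ∈ s, v i) * (∑ i ∈ s, v i) ≤ ((2:ℝ) ^ s.card) • ∑ i ∈ s, star (v i) * v i := by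
  induction s using Finset.cons_induction with
  | empty => simp
  | cons a s ha ih =>
    rw [Finset.sum_cons, Finset.sum_cons, Finset.card_cons]
    calc star (v a + ∑ i ∈ s, v i) * (v a + ∑ i ∈ s, v i)
        ≤ (2:ℝ) • (star (v a) * v a) + (2:ℝ) • (star (∑ i ∈ s, v i) * (∑ i ∈ s, v i)) :=
          sq_add_le _ _
      _ ≤ (2:ℝ) • (star (v a) * v a) + (2:ℝ) • (((2:ℝ) ^ s.card) • ∑ i ∈ s, star (v i) * v i) := by
          exact add_le_add_right (rsmul_le ih (by norm_num)) _
      _ = (2:ℝ) • (star (v a) * v a)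
          + ((2:ℝ) ^ (s.card + 1)) • ∑ i ∈ s, star (v i) * v i := by
          rw [smul_smul]
          ring_nf
      _ ≤ ((2:ℝ) ^ (s.card + 1)) • (star (v a) * v a)
          + ((2:ℝ) ^ (s.card + 1)) • ∑ i ∈ s, star (v i) * v i := by
          refine add_le_add_left ?_ _
          rw [← sub_nonneg, ← sub_smul]
          refine smul_nonneg ?_ (star_mul_self_nonneg _)
          have : (2:ℝ) ≤ (2:ℝ) ^ (s.card + 1) := by
            calc (2:ℝ) = 2 ^ 1 := (pow_one 2).symm
              _ ≤ 2 ^ (s.card + 1) := by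
                apply pow_le_pow_right₀ (by norm_num) (by omega)
          linarith
      _ = ((2:ℝ) ^ (s.card + 1)) • (star (v a) * v a + ∑ i ∈ s, star (v i) * v i) := by
          rw [smul_add]

end SumSq

theorem condexp_findim_implies_finite_index
    {M : Type*} [CStarAlgebra M] [PartialOrder M] [StarOrderedRing M]
    [FiniteDimensional ℂ M]
    (E : M → M) (hE : IsCondExp E)
    (hfaith : ∀ a : M, E (star a * a) = 0 → a = 0) :
    ∃ K : ℝ, 1 ≤ K ∧ ∀ a : M, 0 ≤ a → 0 ≤ K • E a - a := by
  classical
  obtain ⟨n, y, hy⟩ := exists_reproducing E hE hfaith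
  set C : ℝ := (2:ℝ) ^ n * ∑ i, ‖star (y i) * y i‖ * ‖y i * star (y i)‖ with hC
  have hC0 : 0 ≤ C :=
    mul_nonneg (by positivity)
      (Finset.sum_nonneg fun i _ => mul_nonneg (norm_nonneg _) (norm_nonneg _))
  refine ⟨C + 1, by linarith, ?_⟩
  intro a ha
  set c := CFC.sqrt a with hcdef
  have hcc : star c * c = a := by
    have h1 : IsSelfAdjoint c := IsSelfAdjoint.of_nonneg (CFC.sqrt_nonneg (a := a))
    rw [h1.star_eq, ← sq, hcdef, CFC.sq_sqrt a ha]
  have hkey : a ≤ C • E a := by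
    set g : Fin n → M := fun i => E (star (y i) * c) with hg
    have ha_eq : a = star (∑ i, y i * g i) * (∑ i, y i * g i) := by
      rw [show (∑ i, y i * g i) = c from hy c, hcc]
    have h1 : a ≤ ((2:ℝ) ^ n) • ∑ i, star (y i * g i) * (y i * g i) := by
      rw [ha_eq]
      have h := sum_sq_le Finset.univ (fun i => y i * g i)
      simpa [Finset.card_univ] using h
    have h2 : ∀ i, star (y i * g i) * (y i * g i)
        ≤ (‖star (y i) * y i‖ * ‖y i * star (y i)‖) • E a := by
      intro i
      have e1 : star (y i * g i) * (y i * g i) = star (g i) * (star (y i) * y i) * g i := by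
        rw [star_mul]
        noncomm_ring
      have e2 : star (y i) * y i ≤ algebraMap ℝ M ‖star (y i) * y i‖ :=
        IsSelfAdjoint.le_algebraMap_norm_self (IsSelfAdjoint.star_mul_self (y i))
      have e3 : star (g i) * (star (y i) * y i) * g i
          ≤ ‖star (y i) * y i‖ • (star (g i) * g i) := by
        calc star (g i) * (star (y i) * y i) * g i
            ≤ star (g i) * algebraMap ℝ M ‖star (y i) * y i‖ * g i :=
              star_left_conjugate_le_conjugate e2 _
          _ = ‖star (y i) * y i‖ • (star (g i) * g i) := by
              rw [Algebra.algebraMap_eq_smul_one, mul_smul_comm, smul_mul_assoc, mul_one]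
      have e4 : star (g i) * g i ≤ E (star (star (y i) * c) * (star (y i) * c)) := by
        rw [hg]
        exact hE.schwarz _
      have e5 : star (star (y i) * c) * (star (y i) * c) = star c * (y i * star (y i)) * c := by
        rw [star_mul, star_star]
        noncomm_ring
      have e6 : y i * star (y i) ≤ algebraMap ℝ M ‖y i * star (y i)‖ :=
        IsSelfAdjoint.le_algebraMap_norm_self (IsSelfAdjoint.mul_star_self (y i))
      have e7 : star c * (y i * star (y i)) * c ≤ ‖y i * star (y i)‖ • a := by
        calc star c * (y i * star (y i)) * c
            ≤ star c * algebraMap ℝ M ‖y i * star (y i)‖ * c := star_left_conjugate_le_conjugate e6 c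
          _ = ‖y i * star (y i)‖ • (star c * c) := by
              rw [Algebra.algebraMap_eq_smul_one, mul_smul_comm, smul_mul_assoc, mul_one]
          _ = ‖y i * star (y i)‖ • a := by rw [hcc]
      have e8 : E (star (star (y i) * c) * (star (y i) * c)) ≤ ‖y i * star (y i)‖ • E a := by
        rw [e5]
        calc E (star c * (y i * star (y i)) * c) ≤ E (‖y i * star (y i)‖ • a) :=
              hE.monotone' e7
          _ = ‖y i * star (y i)‖ • E a := hE.map_real_smul _ _
      calc star (y i * g i) * (y i * g i)
          = star (g i) * (star (y i) * y i) * g i := e1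
        _ ≤ ‖star (y i) * y i‖ • (star (g i) * g i) := e3
        _ ≤ ‖star (y i) * y i‖ • (‖y i * star (y i)‖ • E a) :=
            rsmul_le (le_trans e4 e8) (norm_nonneg _)
        _ = (‖star (y i) * y i‖ * ‖y i * star (y i)‖) • E a := by rw [smul_smul]
    have h3 : (∑ i, star (y i * g i) * (y i * g i))
        ≤ (∑ i, ‖star (y i) * y i‖ * ‖y i * star (y i)‖) • E a := by
      calc (∑ i, star (y i * g i) * (y i * g i))
          ≤ ∑ i, (‖star (y i) * y i‖ * ‖y i * star (y i)‖) • E a :=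
            Finset.sum_le_sum fun i _ => h2 i
        _ = _ := by rw [← Finset.sum_smul]
    calc a ≤ ((2:ℝ) ^ n) • ∑ i, star (y i * g i) * (y i * g i) := h1
      _ ≤ ((2:ℝ) ^ n) • ((∑ i, ‖star (y i) * y i‖ * ‖y i * star (y i)‖) • E a) :=
          rsmul_le h3 (by positivity)
      _ = C • E a := by rw [smul_smul, hC]
  have hEa : 0 ≤ E a := hE.pos a ha
  have hsplit : (C + 1) • E a - a = (C • E a - a) + E a := by
    rw [add_smul, one_smul]
    abel
  rw [hsplit]
  exact add_nonneg (sub_nonneg.mpr hkey) hEa
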